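/- There is a universal constant A > 0 with the following property. Let μ and ν be Borel probability measures on ℝ², let Γ be a grid on ℝ² with C cells, let G be a k×ℓ grid with β = k·ℓ < C cells, let δ (respectively d) denote the Γ-boundary mass of μ (respectively ν) with respect to G, and let G' be the k×ℓ subgrid of Γ obtained from G by replacing each cut point of G that is not a cut point of Γ with a nearest cut point of Γ. Then |I(μ|_G) − I(ν|_G)| ≤ A·δ·log₂(β/δ) + A·d·log₂(β/d) + |I(μ|_{G'}) − I(ν|_{G'})|, where a term x·log₂(β/x) is taken to be 0 when x = 0. -/

import Mathlib

open MeasureTheory Finset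

noncomputable section

/-- A grid with `r` rows and `c` columns on ℝ², given by `r - 1` strictly increasing
row cut points and `c - 1` strictly increasing column cut points. -/
structure Grid (r c : ℕ) where
  rowCuts : Fin (r - 1) → ℝ
  colCuts : Fin (c - 1) → ℝ
  rowCuts_mono : StrictMono rowCuts
  colCuts_mono : StrictMono colCuts

/-- Interval number `i` of the partition of ℝ induced by the cut points `cuts`:
`[cuts (i-1), cuts i)`, with the first interval unbounded below and the last
unbounded above. -/
def cutInterval {m : ℕ} (cuts : Fin (m - 1) → ℝ) (i : Fin m) : Set ℝ :=
  {t | (∀ j : Fin (m - 1), (j : ℕ) < (i : ℕ) → cuts j ≤ t) ∧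
       (∀ j : Fin (m - 1), (i : ℕ) ≤ (j : ℕ) → t < cuts j)}

/-- Cell `(i, j)` (row `i`, column `j`) of a grid, as a subset of ℝ². -/
def Grid.cell {r c : ℕ} (G : Grid r c) (i : Fin r) (j : Fin c) : Set (ℝ × ℝ) :=
  {p | p.1 ∈ cutInterval G.colCuts j ∧ p.2 ∈ cutInterval G.rowCuts i}

/-- The probability mass function on `{1,…,r} × {1,…,c}` induced by a measure `ν`
on a grid `G`: it assigns to `(i, j)` the `ν`-measure of cell `(i, j)`. -/
def gridPMF {r c : ℕ} (ν : Measure (ℝ × ℝ)) (G : Grid r c) (i : Fin r) (j : Fin c) : ℝ :=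
  (ν (G.cell i j)).toReal

open Classical in
/-- The empirical measure of the sample `ω`, as a real-valued set function. -/
def empMeas {n : ℕ} (ω : Fin n → ℝ × ℝ) (S : Set (ℝ × ℝ)) : ℝ :=
  ((Finset.univ.filter (fun i => ω i ∈ S)).card : ℝ) / n

/-- The pmf on cells induced by the empirical measure of the sample `ω`. -/
def empGridPMF {n r c : ℕ} (ω : Fin n → ℝ × ℝ) (G : Grid r c) (i : Fin r) (j : Fin c) : ℝ :=
  empMeas ω (G.cell i j)

/-- Mutual information (base 2) of a pmf `p` on `Fin r × Fin c`, with the convention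
that terms with `p i j = 0` vanish. -/
def MI {r c : ℕ} (p : Fin r → Fin c → ℝ) : ℝ :=
  ∑ i, ∑ j, if p i j = 0 then 0
    else p i j * Real.logb 2 (p i j / ((∑ j', p i j') * (∑ i', p i' j)))


/-- A cell `(i, j)` of the grid `Γ` is `G`-split if it is not contained within a
single cell of `G`. -/
def IsSplit {R S k l : ℕ} (Γ : Grid R S) (G : Grid k l) (i : Fin R) (j : Fin S) : Prop :=
  ¬ ∃ (i' : Fin k) (j' : Fin l), Γ.cell i j ⊆ G.cell i' j'

open Classical in
/-- The `Γ`-boundary mass of a (real-valued set function standing for a) measure `f`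
with respect to `G`: the total `f`-mass of the `G`-split cells of `Γ`. -/
def boundaryMass {R S k l : ℕ} (f : Set (ℝ × ℝ) → ℝ) (Γ : Grid R S) (G : Grid k l) : ℝ :=
  ∑ i, ∑ j, if IsSplit Γ G i j then f (Γ.cell i j) else 0

/-- `G'` is a subgrid of `Γ` if every cut point of `G'` is a cut point of `Γ`. -/
def Subgrid {k l R S : ℕ} (G' : Grid k l) (Γ : Grid R S) : Prop :=
  (∀ i, ∃ i', G'.rowCuts i = Γ.rowCuts i') ∧ (∀ j, ∃ j', G'.colCuts j = Γ.colCuts j')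

/-- `G'` is obtained from `G` by replacing each cut point of `G` that is not a cut
point of `Γ` with a nearest cut point of `Γ`: `G'` is a subgrid of `Γ` and each of
its cut points is a cut point of `Γ` nearest to the corresponding cut point of `G`. -/
def IsSnap {R S k l : ℕ} (Γ : Grid R S) (G G' : Grid k l) : Prop :=
  Subgrid G' Γ ∧
  (∀ i i', |G'.rowCuts i - G.rowCuts i| ≤ |Γ.rowCuts i' - G.rowCuts i|) ∧
  (∀ j j', |G'.colCuts j - G.colCuts j| ≤ |Γ.colCuts j' - G.colCuts j|)

/-- `x · log₂ (β / x)`, with the convention that the value is `0` when `x = 0`. -/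
def xlogb (β x : ℝ) : ℝ := if x = 0 then 0 else x * Real.logb 2 (β / x)





lemma aux_negMulLog_add_le {y t : ℝ} (hy : 0 ≤ y) (ht : 0 ≤ t) :
    Real.negMulLog (y + t) ≤ Real.negMulLog y + Real.negMulLog t := by
  rcases hy.eq_or_lt with h0 | hy0
  · simp [← h0]
  rcases ht.eq_or_lt with h1 | ht0
  · simp [← h1]
  have hyt : (0:ℝ) < y + t := by linarith
  have h2 : y * Real.log y ≤ y * Real.log (y + t) := by
    have : Real.log y ≤ Real.log (y + t) := by
      gcongr; linarith
    exact mul_le_mul_of_nonneg_left this hy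
  have h3 : t * Real.log t ≤ t * Real.log (y + t) := by
    have : Real.log t ≤ Real.log (y + t) := by
      gcongr; linarith
    exact mul_le_mul_of_nonneg_left this ht
  simp only [Real.negMulLog, neg_mul]
  nlinarith [h2, h3]

lemma aux_sub_negMulLog_le {y t : ℝ} (hy : 0 ≤ y) (ht : 0 ≤ t) (h1 : y + t ≤ 1) :
    Real.negMulLog y - Real.negMulLog (y + t) ≤ t := by
  rcases hy.eq_or_lt with h0 | hy0
  · simp only [← h0, Real.negMulLog_zero, zero_add, zero_sub, Real.negMulLog, neg_mul, neg_neg]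
    have : Real.log t ≤ 0 := Real.log_nonpos ht (by linarith)
    nlinarith
  · have hyt : (0:ℝ) < y + t := by linarith
    have hlog : Real.log ((y + t) / y) ≤ (y + t) / y - 1 :=
      Real.log_le_sub_one_of_pos (by positivity)
    have hdiv : Real.log ((y + t) / y) = Real.log (y + t) - Real.log y :=
      Real.log_div (by positivity) (by positivity)
    have hnp : Real.log (y + t) ≤ 0 := Real.log_nonpos hyt.le h1
    have h2 : y * Real.log (y + t) - y * Real.log y ≤ t := by
      have := mul_le_mul_of_nonneg_left hlog hy
      rw [hdiv] at this
      have hy' : y * ((y + t) / y - 1) = t := by field_simp; ring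
      nlinarith
    simp only [Real.negMulLog, neg_mul]
    nlinarith [mul_nonneg ht (neg_nonneg.2 hnp)]

lemma aux_abs_negMulLog_sub {x y : ℝ} (hx0 : 0 ≤ x) (hx1 : x ≤ 1) (hy0 : 0 ≤ y) (hy1 : y ≤ 1) :
    |Real.negMulLog x - Real.negMulLog y| ≤ Real.negMulLog |x - y| + |x - y| := by
  wlog h : y ≤ x generalizing x y
  · rw [abs_sub_comm (Real.negMulLog x), abs_sub_comm x y]
    exact this hy0 hy1 hx0 hx1 (le_of_not_ge h)
  have ht : 0 ≤ x - y := by linarith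
  rw [abs_of_nonneg ht]
  have hxy : x = y + (x - y) := by ring
  have h1 : Real.negMulLog x ≤ Real.negMulLog y + Real.negMulLog (x - y) := by
    have h := aux_negMulLog_add_le hy0 ht
    rwa [show y + (x - y) = x by ring] at h
  have h2 : Real.negMulLog y - Real.negMulLog x ≤ x - y := by
    have := aux_sub_negMulLog_le hy0 ht (by linarith : y + (x - y) ≤ 1)
    rwa [← hxy] at this
  have h3 : 0 ≤ Real.negMulLog (x - y) := Real.negMulLog_nonneg ht (by linarith)
  rw [abs_le]; constructor <;> linarith

lemma aux_sum_negMulLog_le {ι : Type*} (s : Finset ι) (t : ι → ℝ) (ht : ∀ i ∈ s, 0 ≤ t i)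
    {n : ℝ} (hn : (s.card : ℝ) ≤ n) (hε : 0 < ∑ i ∈ s, t i) (hεn : (∑ i ∈ s, t i) ≤ n) :
    ∑ i ∈ s, Real.negMulLog (t i) ≤ (∑ i ∈ s, t i) * Real.log (n / ∑ i ∈ s, t i) := by
  set ε := ∑ i ∈ s, t i with hεdef
  have hn0 : 0 < n := lt_of_lt_of_le hε hεn
  have key : ∀ i ∈ s, Real.negMulLog (t i) ≤ ε / n - t i + t i * Real.log (n / ε) := by
    intro i hi
    rcases (ht i hi).eq_or_lt with h0 | h0
    · simp only [← h0, Real.negMulLog_zero, mul_zero, zero_mul, sub_zero, add_zero]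
      positivity
    · have hlog : Real.log (ε / (n * t i)) ≤ ε / (n * t i) - 1 :=
        Real.log_le_sub_one_of_pos (by positivity)
      have e1 : Real.log (ε / (n * t i)) = Real.log ε - Real.log n - Real.log (t i) := by
        rw [Real.log_div (by positivity) (by positivity), Real.log_mul (by positivity) (by positivity)]
        ring
      have e2 : Real.log (n / ε) = Real.log n - Real.log ε :=
        Real.log_div (by positivity) (by positivity)
      have h4 := mul_le_mul_of_nonneg_left hlog h0.le
      rw [e1] at h4
      have h5 : t i * (ε / (n * t i) - 1) = ε / n - t i := by field_simp
      rw [h5] at h4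
      simp only [Real.negMulLog, neg_mul, e2]
      nlinarith
  calc ∑ i ∈ s, Real.negMulLog (t i)
      ≤ ∑ i ∈ s, (ε / n - t i + t i * Real.log (n / ε)) := Finset.sum_le_sum key
    _ = (s.card : ℝ) * (ε / n) - ε + ε * Real.log (n / ε) := by
        rw [Finset.sum_add_distrib, Finset.sum_sub_distrib, Finset.sum_const, ← Finset.sum_mul]
        simp [hεdef, nsmul_eq_mul]
    _ ≤ ε * Real.log (n / ε) := by
        have : (s.card : ℝ) * (ε / n) ≤ n * (ε / n) :=
          mul_le_mul_of_nonneg_right hn (by positivity)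
        have h6 : n * (ε / n) = ε := by field_simp
        nlinarith

lemma aux_one_le_log_four : (1:ℝ) ≤ Real.log 4 := by
  rw [Real.le_log_iff_exp_le (by norm_num)]
  have := Real.exp_one_lt_d9
  linarith

lemma aux_xlog_mono {c a b : ℝ} (ha : 0 < a) (hab : a ≤ b) (hb : b ≤ 1) (hc : 4 ≤ c) :
    a * Real.log (c / a) ≤ b * Real.log (c / b) := by
  have hb0 : 0 < b := lt_of_lt_of_le ha hab
  have hc0 : (0:ℝ) < c := by linarith
  have h1 : Real.log (b / a) ≤ b / a - 1 := Real.log_le_sub_one_of_pos (by positivity)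
  have e1 : Real.log (b / a) = Real.log b - Real.log a := Real.log_div (by positivity) (by positivity)
  have h1' : a * (Real.log b - Real.log a) ≤ b - a := by
    have := mul_le_mul_of_nonneg_left h1 ha.le
    rw [e1] at this
    have : a * (Real.log b - Real.log a) ≤ a * (b / a - 1) := by
      rw [← e1]; exact mul_le_mul_of_nonneg_left h1 ha.le
    have h2 : a * (b / a - 1) = b - a := by field_simp
    linarith
  have h2 : 1 ≤ Real.log c := le_trans aux_one_le_log_four (Real.log_le_log (by norm_num) hc)
  have h3 : Real.log b ≤ 0 := Real.log_nonpos hb0.le hb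
  rw [Real.log_div (by positivity) (by positivity), Real.log_div (by positivity) (by positivity)]
  nlinarith

lemma aux_negMulLog_sum_le {ι : Type*} (s : Finset ι) (t : ι → ℝ) (ht : ∀ i ∈ s, 0 ≤ t i) :
    Real.negMulLog (∑ i ∈ s, t i) ≤ ∑ i ∈ s, Real.negMulLog (t i) := by
  induction s using Finset.cons_induction with
  | empty => simp
  | cons a s ha ih =>
    rw [Finset.sum_cons, Finset.sum_cons]
    have h1 := aux_negMulLog_add_le (ht a (Finset.mem_cons_self a s))
      (Finset.sum_nonneg fun i hi => ht i (Finset.mem_cons_of_mem hi))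
    have h2 := ih fun i hi => ht i (Finset.mem_cons_of_mem hi)
    linarith


section MIlemmas

variable {r c : ℕ}

/-- Decomposition of `MI` into entropies. -/
lemma MI_eq_entropies (p : Fin r → Fin c → ℝ) (hp : ∀ i j, 0 ≤ p i j) :
    MI p = ((∑ i, Real.negMulLog (∑ j, p i j)) + (∑ j, Real.negMulLog (∑ i, p i j))
      - ∑ i, ∑ j, Real.negMulLog (p i j)) / Real.log 2 := by
  have hlog2 : Real.log 2 ≠ 0 := by positivity
  have key : ∀ i j, (if p i j = 0 then (0:ℝ)
      else p i j * Real.logb 2 (p i j / ((∑ j', p i j') * (∑ i', p i' j))))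
      = (- Real.negMulLog (p i j) - p i j * Real.log (∑ j', p i j')
          - p i j * Real.log (∑ i', p i' j)) / Real.log 2 := by
    intro i j
    by_cases h0 : p i j = 0
    · simp [h0]
    · have hpij : 0 < p i j := lt_of_le_of_ne (hp i j) (Ne.symm h0)
      have hr : 0 < ∑ j', p i j' :=
        lt_of_lt_of_le hpij (Finset.single_le_sum (fun j' _ => hp i j') (Finset.mem_univ j))
      have hc : 0 < ∑ i', p i' j :=
        lt_of_lt_of_le hpij (Finset.single_le_sum (fun i' _ => hp i' j) (Finset.mem_univ i))
      rw [if_neg h0, Real.logb, Real.log_div (ne_of_gt hpij) (by positivity),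
        Real.log_mul (ne_of_gt hr) (ne_of_gt hc)]
      simp only [Real.negMulLog, neg_mul]
      field_simp
      ring
  simp only [MI, key]
  rw [eq_div_iff hlog2]
  simp only [← Finset.sum_div]
  rw [div_mul_cancel₀ _ hlog2]
  have erow : ∑ i, ∑ j, p i j * Real.log (∑ j', p i j')
      = - ∑ i, Real.negMulLog (∑ j, p i j) := by
    rw [← Finset.sum_neg_distrib]
    refine Finset.sum_congr rfl fun i _ => ?_
    rw [← Finset.sum_mul]
    simp [Real.negMulLog]
  have ecol : ∑ i, ∑ j, p i j * Real.log (∑ i', p i' j)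
      = - ∑ j, Real.negMulLog (∑ i, p i j) := by
    rw [Finset.sum_comm, ← Finset.sum_neg_distrib]
    refine Finset.sum_congr rfl fun j _ => ?_
    rw [← Finset.sum_mul]
    simp [Real.negMulLog]
  simp only [Finset.sum_sub_distrib, Finset.sum_neg_distrib, erow, ecol]
  ring


lemma aux_entropy_diff {ι : Type*} [Fintype ι] (a b : ι → ℝ)
    (ha : ∀ i, 0 ≤ a i) (ha1 : ∀ i, a i ≤ 1) (hb : ∀ i, 0 ≤ b i) (hb1 : ∀ i, b i ≤ 1)
    {n E : ℝ} (hcard : (Fintype.card ι : ℝ) ≤ n) (hn : 4 ≤ n)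
    (hd : ∑ i, |a i - b i| ≤ E) (hE1 : E ≤ 1) (hE0 : 0 < E) :
    |(∑ i, Real.negMulLog (a i)) - ∑ i, Real.negMulLog (b i)| ≤ 2 * (E * Real.log (n / E)) := by
  have hn0 : (0:ℝ) < n := by linarith
  have hlog1 : 1 ≤ Real.log (n / E) := by
    refine le_trans aux_one_le_log_four (Real.log_le_log (by norm_num) ?_)
    rw [le_div_iff₀ hE0]; nlinarith
  set d := fun i => |a i - b i| with hddef
  have hd0 : ∀ i, 0 ≤ d i := fun i => abs_nonneg _
  set ε := ∑ i, d i with hεdef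
  have hε0 : 0 ≤ ε := Finset.sum_nonneg fun i _ => hd0 i
  have step1 : |(∑ i, Real.negMulLog (a i)) - ∑ i, Real.negMulLog (b i)|
      ≤ (∑ i, Real.negMulLog (d i)) + ε := by
    rw [← Finset.sum_sub_distrib]
    refine le_trans (Finset.abs_sum_le_sum_abs _ _) ?_
    rw [hεdef, ← Finset.sum_add_distrib]
    exact Finset.sum_le_sum fun i _ =>
      aux_abs_negMulLog_sub (ha i) (ha1 i) (hb i) (hb1 i)
  have step2 : (∑ i, Real.negMulLog (d i)) ≤ E * Real.log (n / E) := by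
    rcases hε0.eq_or_lt with h0 | h0
    · have hz : ∀ i ∈ Finset.univ, d i = 0 := fun i hi =>
        le_antisymm (by
          have := Finset.single_le_sum (fun j (_ : j ∈ Finset.univ) => hd0 j) hi
          rw [← hεdef] at this; linarith) (hd0 i)
      have : (∑ i, Real.negMulLog (d i)) = 0 := by
        refine Finset.sum_eq_zero fun i hi => ?_
        rw [hz i hi, Real.negMulLog_zero]
      rw [this]; positivity
    · have h1 := aux_sum_negMulLog_le Finset.univ d (fun i _ => hd0 i)
        (by simpa using hcard) (by rw [← hεdef] at *; exact h0) (by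
          rw [← hεdef]; linarith)
      rw [← hεdef] at h1
      refine le_trans h1 (aux_xlog_mono h0 hd hE1 hn)
  have step3 : ε ≤ E * Real.log (n / E) := by nlinarith
  linarith

lemma abs_MI_le {r c : ℕ} (p : Fin r → Fin c → ℝ) (hp : ∀ i j, 0 ≤ p i j)
    (hsum : ∑ i, ∑ j, p i j = 1) {n : ℝ} (hr : (r : ℝ) ≤ n) (hcn : (c : ℝ) ≤ n)
    (hrc : ((r : ℝ) * c) ≤ n) (hn1 : 1 ≤ n) :
    |MI p| ≤ Real.log n / Real.log 2 := by
  have hlog2 : (0:ℝ) < Real.log 2 := Real.log_pos (by norm_num)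
  have hn0 : (0:ℝ) < n := by linarith
  have hrow0 : ∀ i, 0 ≤ ∑ j, p i j := fun i => Finset.sum_nonneg fun j _ => hp i j
  have hcol0 : ∀ j, 0 ≤ ∑ i, p i j := fun j => Finset.sum_nonneg fun i _ => hp i j
  have hrow1 : ∀ i, ∑ j, p i j ≤ 1 := by
    intro i
    calc ∑ j, p i j ≤ ∑ i', ∑ j, p i' j :=
          Finset.single_le_sum (fun i' _ => hrow0 i') (Finset.mem_univ i)
      _ = 1 := hsum
  have hcolsum : ∑ j, ∑ i, p i j = 1 := by rw [Finset.sum_comm]; exact hsum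
  have hcol1 : ∀ j, ∑ i, p i j ≤ 1 := by
    intro j
    calc ∑ i, p i j ≤ ∑ j', ∑ i, p i j' :=
          Finset.single_le_sum (fun j' _ => hcol0 j') (Finset.mem_univ j)
      _ = 1 := hcolsum
  have hHr0 : 0 ≤ ∑ i, Real.negMulLog (∑ j, p i j) :=
    Finset.sum_nonneg fun i _ => Real.negMulLog_nonneg (hrow0 i) (hrow1 i)
  have hHc0 : 0 ≤ ∑ j, Real.negMulLog (∑ i, p i j) :=
    Finset.sum_nonneg fun j _ => Real.negMulLog_nonneg (hcol0 j) (hcol1 j)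
  have hHtsHr : (∑ i, Real.negMulLog (∑ j, p i j)) ≤ ∑ i, ∑ j, Real.negMulLog (p i j) :=
    Finset.sum_le_sum fun i _ => aux_negMulLog_sum_le Finset.univ _ (fun j _ => hp i j)
  have hHc : (∑ j, Real.negMulLog (∑ i, p i j)) ≤ Real.log n := by
    rcases eq_or_lt_of_le (le_of_eq hcolsum.symm) with h | h
    · have h1 := aux_sum_negMulLog_le Finset.univ (fun j => ∑ i, p i j)
        (fun j _ => hcol0 j) (by simpa using hcn) (by rw [hcolsum]; norm_num)
        (by rw [hcolsum]; linarith)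
      rw [hcolsum] at h1
      simpa using h1
    · exact absurd hcolsum (by linarith)
  have hHts : (∑ i, ∑ j, Real.negMulLog (p i j)) ≤ Real.log n := by
    have e1 : (∑ i, ∑ j, Real.negMulLog (p i j))
        = ∑ x : Fin r × Fin c, Real.negMulLog (p x.1 x.2) := by
      rw [Fintype.sum_prod_type]
    have e2 : (∑ i, ∑ j, p i j) = ∑ x : Fin r × Fin c, p x.1 x.2 := by
      rw [Fintype.sum_prod_type]
    have h1 := aux_sum_negMulLog_le Finset.univ (fun x : Fin r × Fin c => p x.1 x.2)
      (fun x _ => hp x.1 x.2)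
      (by simpa [Fintype.card_prod] using hrc)
      (by rw [← e2, hsum]; norm_num) (by rw [← e2, hsum]; linarith)
    rw [← e2, hsum] at h1
    rw [e1]
    simpa using h1
  rw [MI_eq_entropies p hp, abs_div, abs_of_pos hlog2]
  have habs : |(∑ i, Real.negMulLog (∑ j, p i j)) + (∑ j, Real.negMulLog (∑ i, p i j))
      - ∑ i, ∑ j, Real.negMulLog (p i j)| ≤ Real.log n := by
    rw [abs_le]; constructor <;> nlinarith
  gcongr


lemma abs_MI_sub_le {r c : ℕ} (p q : Fin r → Fin c → ℝ)
    (hp : ∀ i j, 0 ≤ p i j) (hq : ∀ i j, 0 ≤ q i j)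
    (hps : ∑ i, ∑ j, p i j = 1) (hqs : ∑ i, ∑ j, q i j = 1)
    {n E : ℝ} (hr : (r:ℝ) ≤ n) (hcn : (c:ℝ) ≤ n) (hrc : ((r:ℝ) * c) ≤ n) (hn : 4 ≤ n)
    (hE : (∑ i, ∑ j, |p i j - q i j|) ≤ E) (hE1 : E ≤ 1) (hE0 : 0 < E) :
    |MI p - MI q| ≤ 6 * (E * Real.log (n / E)) / Real.log 2 := by
  have hlog2 : (0:ℝ) < Real.log 2 := Real.log_pos (by norm_num)
  -- entry and marginal bounds
  have entry_le_one : ∀ (u : Fin r → Fin c → ℝ), (∀ i j, 0 ≤ u i j) →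
      (∑ i, ∑ j, u i j = 1) → ∀ i j, u i j ≤ 1 := by
    intro u hu hus i j
    calc u i j ≤ ∑ j', u i j' := Finset.single_le_sum (fun j' _ => hu i j') (Finset.mem_univ j)
      _ ≤ ∑ i', ∑ j', u i' j' := Finset.single_le_sum
          (fun i' _ => Finset.sum_nonneg fun j' _ => hu i' j') (Finset.mem_univ i)
      _ = 1 := hus
  have row0 : ∀ (u : Fin r → Fin c → ℝ), (∀ i j, 0 ≤ u i j) → ∀ i, 0 ≤ ∑ j, u i j :=
    fun u hu i => Finset.sum_nonneg fun j _ => hu i j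
  have col0 : ∀ (u : Fin r → Fin c → ℝ), (∀ i j, 0 ≤ u i j) → ∀ j, 0 ≤ ∑ i, u i j :=
    fun u hu j => Finset.sum_nonneg fun i _ => hu i j
  have row1 : ∀ (u : Fin r → Fin c → ℝ), (∀ i j, 0 ≤ u i j) →
      (∑ i, ∑ j, u i j = 1) → ∀ i, (∑ j, u i j) ≤ 1 := by
    intro u hu hus i
    calc (∑ j, u i j) ≤ ∑ i', ∑ j, u i' j :=
        Finset.single_le_sum (fun i' _ => row0 u hu i') (Finset.mem_univ i)
      _ = 1 := hus
  have col1 : ∀ (u : Fin r → Fin c → ℝ), (∀ i j, 0 ≤ u i j) →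
      (∑ i, ∑ j, u i j = 1) → ∀ j, (∑ i, u i j) ≤ 1 := by
    intro u hu hus j
    have hcs : ∑ j', ∑ i, u i j' = 1 := by rw [Finset.sum_comm]; exact hus
    calc (∑ i, u i j) ≤ ∑ j', ∑ i, u i j' :=
        Finset.single_le_sum (fun j' _ => col0 u hu j') (Finset.mem_univ j)
      _ = 1 := hcs
  -- three entropy differences
  have hHr : |(∑ i, Real.negMulLog (∑ j, p i j)) - ∑ i, Real.negMulLog (∑ j, q i j)|
      ≤ 2 * (E * Real.log (n / E)) := by
    refine aux_entropy_diff _ _ (row0 p hp) (row1 p hp hps) (row0 q hq) (row1 q hq hqs)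
      (by simpa using hr) hn ?_ hE1 hE0
    refine le_trans (Finset.sum_le_sum fun i _ => ?_) hE
    rw [← Finset.sum_sub_distrib]
    exact Finset.abs_sum_le_sum_abs _ _
  have hHc : |(∑ j, Real.negMulLog (∑ i, p i j)) - ∑ j, Real.negMulLog (∑ i, q i j)|
      ≤ 2 * (E * Real.log (n / E)) := by
    refine aux_entropy_diff _ _ (col0 p hp) (col1 p hp hps) (col0 q hq) (col1 q hq hqs)
      (by simpa using hcn) hn ?_ hE1 hE0
    calc ∑ j, |(∑ i, p i j) - ∑ i, q i j|
        ≤ ∑ j, ∑ i, |p i j - q i j| := Finset.sum_le_sum fun j _ => by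
          rw [← Finset.sum_sub_distrib]; exact Finset.abs_sum_le_sum_abs _ _
      _ = ∑ i, ∑ j, |p i j - q i j| := Finset.sum_comm
      _ ≤ E := hE
  have hHts : |(∑ i, ∑ j, Real.negMulLog (p i j)) - ∑ i, ∑ j, Real.negMulLog (q i j)|
      ≤ 2 * (E * Real.log (n / E)) := by
    have e1 : ∀ (u : Fin r → Fin c → ℝ), (∑ i, ∑ j, Real.negMulLog (u i j))
        = ∑ x : Fin r × Fin c, Real.negMulLog (u x.1 x.2) := by
      intro u; rw [Fintype.sum_prod_type]
    rw [e1, e1]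
    refine aux_entropy_diff (fun x : Fin r × Fin c => p x.1 x.2)
      (fun x => q x.1 x.2) (fun x => hp x.1 x.2)
      (fun x => entry_le_one p hp hps x.1 x.2) (fun x => hq x.1 x.2)
      (fun x => entry_le_one q hq hqs x.1 x.2)
      (by simpa [Fintype.card_prod] using hrc) hn ?_ hE1 hE0
    rw [Fintype.sum_prod_type]
    exact hE
  rw [MI_eq_entropies p hp, MI_eq_entropies q hq, div_sub_div_same, abs_div,
    abs_of_pos hlog2]
  have hX : |((∑ i, Real.negMulLog (∑ j, p i j)) + (∑ j, Real.negMulLog (∑ i, p i j))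
        - ∑ i, ∑ j, Real.negMulLog (p i j))
      - ((∑ i, Real.negMulLog (∑ j, q i j)) + (∑ j, Real.negMulLog (∑ i, q i j))
        - ∑ i, ∑ j, Real.negMulLog (q i j))| ≤ 6 * (E * Real.log (n / E)) := by
    have e : ((∑ i, Real.negMulLog (∑ j, p i j)) + (∑ j, Real.negMulLog (∑ i, p i j))
        - ∑ i, ∑ j, Real.negMulLog (p i j))
      - ((∑ i, Real.negMulLog (∑ j, q i j)) + (∑ j, Real.negMulLog (∑ i, q i j))
        - ∑ i, ∑ j, Real.negMulLog (q i j))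
      = ((∑ i, Real.negMulLog (∑ j, p i j)) - ∑ i, Real.negMulLog (∑ j, q i j))
        + ((∑ j, Real.negMulLog (∑ i, p i j)) - ∑ j, Real.negMulLog (∑ i, q i j))
        - ((∑ i, ∑ j, Real.negMulLog (p i j)) - ∑ i, ∑ j, Real.negMulLog (q i j)) := by
      ring
    rw [e]
    refine le_trans (abs_sub _ _) (le_trans (add_le_add (abs_add_le _ _) le_rfl) ?_)
    linarith
  gcongr

end MIlemmas

section Geometry

lemma measurableSet_cutInterval {m : ℕ} (cuts : Fin (m - 1) → ℝ) (i : Fin m) :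
    MeasurableSet (cutInterval cuts i) := by
  have : cutInterval cuts i =
      (⋂ j : Fin (m - 1), {t : ℝ | (j : ℕ) < (i : ℕ) → cuts j ≤ t}) ∩
      (⋂ j : Fin (m - 1), {t : ℝ | (i : ℕ) ≤ (j : ℕ) → t < cuts j}) := by
    ext t
    simp only [cutInterval, Set.mem_inter_iff, Set.mem_iInter, Set.mem_setOf_eq]
  rw [this]
  refine MeasurableSet.inter (MeasurableSet.iInter fun j => ?_)
    (MeasurableSet.iInter fun j => ?_)
  · by_cases h : (j : ℕ) < (i : ℕ)
    · have : {t : ℝ | (j : ℕ) < (i : ℕ) → cuts j ≤ t} = Set.Ici (cuts j) := by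
        ext t; simp [h]
      rw [this]; exact measurableSet_Ici
    · have : {t : ℝ | (j : ℕ) < (i : ℕ) → cuts j ≤ t} = Set.univ := by
        ext t; simp [h]
      rw [this]; exact MeasurableSet.univ
  · by_cases h : (i : ℕ) ≤ (j : ℕ)
    · have : {t : ℝ | (i : ℕ) ≤ (j : ℕ) → t < cuts j} = Set.Iio (cuts j) := by
        ext t; simp [h]
      rw [this]; exact measurableSet_Iio
    · have : {t : ℝ | (i : ℕ) ≤ (j : ℕ) → t < cuts j} = Set.univ := by
        ext t; simp [h]
      rw [this]; exact MeasurableSet.univ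

lemma Grid.measurableSet_cell {r c : ℕ} (G : Grid r c) (i : Fin r) (j : Fin c) :
    MeasurableSet (G.cell i j) := by
  have : G.cell i j = (Prod.fst ⁻¹' cutInterval G.colCuts j) ∩
      (Prod.snd ⁻¹' cutInterval G.rowCuts i) := rfl
  rw [this]
  exact (measurable_fst (measurableSet_cutInterval _ _)).inter
    (measurable_snd (measurableSet_cutInterval _ _))

lemma cutInterval_unique {m : ℕ} {cuts : Fin (m - 1) → ℝ} {i i' : Fin m} {t : ℝ}
    (h : t ∈ cutInterval cuts i) (h' : t ∈ cutInterval cuts i') : i = i' := by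
  by_contra hne
  wlog hlt : (i : ℕ) < (i' : ℕ) generalizing i i'
  · exact this h' h (Ne.symm hne) (by omega)
  have hj : (i : ℕ) < m - 1 := by omega
  set j : Fin (m - 1) := ⟨(i : ℕ), hj⟩
  have h1 : t < cuts j := h.2 j (le_refl _)
  have h2 : cuts j ≤ t := h'.1 j hlt
  linarith

lemma cutInterval_exists {m : ℕ} (hm : 0 < m) {cuts : Fin (m - 1) → ℝ}
    (hmono : Monotone cuts) (t : ℝ) : ∃ i : Fin m, t ∈ cutInterval cuts i := by
  classical
  set s : Finset (Fin (m - 1)) := Finset.univ.filter (fun j => cuts j ≤ t) with hs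
  have hdown : ∀ j j' : Fin (m - 1), j' ≤ j → j ∈ s → j' ∈ s := by
    intro j j' hle hj
    simp only [hs, Finset.mem_filter, Finset.mem_univ, true_and] at hj ⊢
    exact le_trans (hmono hle) hj
  have hmem_iff : ∀ j : Fin (m - 1), j ∈ s ↔ (j : ℕ) < s.card := by
    intro j
    constructor
    · intro hj
      have hsub : Finset.Iic j ⊆ s := fun x hx => hdown j x (Finset.mem_Iic.1 hx) hj
      have := Finset.card_le_card hsub
      rw [Fin.card_Iic] at this
      omega
    · intro hj
      by_contra hns
      have hsub : s ⊆ Finset.Iio j := by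
        intro x hx
        rw [Finset.mem_Iio]
        by_contra hxj
        exact hns (hdown x j (le_of_not_gt hxj) hx)
      have := Finset.card_le_card hsub
      rw [Fin.card_Iio] at this
      omega
  have hcard : s.card < m := by
    have := Finset.card_le_card (Finset.subset_univ s)
    simp only [Finset.card_univ, Fintype.card_fin] at this
    omega
  refine ⟨⟨s.card, hcard⟩, ?_, ?_⟩
  · intro j hj
    have : j ∈ s := (hmem_iff j).2 hj
    simpa [hs] using (Finset.mem_filter.1 this).2
  · intro j hj
    have : j ∉ s := fun hmem => by
      have := (hmem_iff j).1 hmem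
      simp at hj ⊢
      omega
    have : ¬ cuts j ≤ t := fun hc => this (by simp [hs, hc])
    linarith [lt_of_not_ge this]


lemma Grid.cell_unique {r c : ℕ} (G : Grid r c) {i i' : Fin r} {j j' : Fin c}
    {x : ℝ × ℝ} (h : x ∈ G.cell i j) (h' : x ∈ G.cell i' j') : i = i' ∧ j = j' :=
  ⟨cutInterval_unique h.2 h'.2, cutInterval_unique h.1 h'.1⟩

lemma Grid.cell_exists {r c : ℕ} (G : Grid r c) (hr : 0 < r) (hc : 0 < c) (x : ℝ × ℝ) :
    ∃ (i : Fin r) (j : Fin c), x ∈ G.cell i j := by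
  obtain ⟨j, hj⟩ := cutInterval_exists hc G.colCuts_mono.monotone x.1
  obtain ⟨i, hi⟩ := cutInterval_exists hr G.rowCuts_mono.monotone x.2
  exact ⟨i, j, hj, hi⟩

open MeasureTheory in
lemma sum_measure_cells {r c : ℕ} (G : Grid r c) (hr : 0 < r) (hc : 0 < c)
    (μ : Measure (ℝ × ℝ)) {T : Set (ℝ × ℝ)} (hT : MeasurableSet T) :
    ∑ i : Fin r, ∑ j : Fin c, μ (T ∩ G.cell i j) = μ T := by
  classical
  have hdisj : ((Finset.univ : Finset (Fin r × Fin c)) :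
      Set (Fin r × Fin c)).PairwiseDisjoint
      (fun p : Fin r × Fin c => T ∩ G.cell p.1 p.2) := by
    intro p _ q _ hpq
    refine Set.disjoint_left.2 fun x hxp hxq => hpq ?_
    obtain ⟨h1, h2⟩ := G.cell_unique hxp.2 hxq.2
    exact Prod.ext h1 h2
  have hmeas : ∀ p ∈ (Finset.univ : Finset (Fin r × Fin c)),
      MeasurableSet (T ∩ G.cell p.1 p.2) :=
    fun p _ => hT.inter (G.measurableSet_cell p.1 p.2)
  have hcover : (⋃ p ∈ (Finset.univ : Finset (Fin r × Fin c)),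
      T ∩ G.cell p.1 p.2) = T := by
    ext x
    simp only [Set.mem_iUnion, Finset.mem_univ, Set.mem_inter_iff, exists_prop, true_and]
    constructor
    · rintro ⟨p, hx, _⟩; exact hx
    · intro hx
      obtain ⟨i, j, hij⟩ := G.cell_exists hr hc x
      exact ⟨(i, j), hx, hij⟩
  rw [← Fintype.sum_prod_type']
  rw [← measure_biUnion_finset hdisj hmeas, hcover]

lemma snap1d {M m : ℕ} {Γc : Fin (M - 1) → ℝ} {cc cc' : Fin (m - 1) → ℝ}
    (hΓ : StrictMono Γc)
    (hsub : ∀ i, ∃ i', cc' i = Γc i')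
    (hsnap : ∀ i i', |cc' i - cc i| ≤ |Γc i' - cc i|)
    {a : Fin M} {j : Fin m} {t : ℝ}
    (ht : t ∈ cutInterval Γc a)
    (hI : cutInterval Γc a ⊆ cutInterval cc j) :
    t ∈ cutInterval cc' j := by
  constructor
  · -- left cuts of the target interval lie below t
    intro m' hm'
    obtain ⟨i₀, hi₀⟩ := hsub m'
    rcases Nat.eq_zero_or_pos (a : ℕ) with ha0 | ha0
    · -- impossible: the interval is unbounded below but lies right of cc m'
      exfalso
      set s : ℝ := min t (cc m') - 1 with hsdef
      have hsI : s ∈ cutInterval Γc a := by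
        constructor
        · intro p hp; omega
        · intro p _
          have h1 : t < Γc p := ht.2 p (by omega)
          have : s ≤ t - 1 := by
            simp only [hsdef]
            have := min_le_left t (cc m')
            linarith
          linarith
      have := (hI hsI).1 m' hm'
      have : s ≤ t - 0 := by linarith [min_le_right t (cc m')]
      have h2 := (hI hsI).1 m' hm'
      have h3 : s ≤ cc m' - 1 := by
        simp only [hsdef]; linarith [min_le_right t (cc m')]
      linarith
    · -- use the Γ cut just left of the interval
      have hpa : (a : ℕ) - 1 < M - 1 := by
        have := a.isLt; omega
      set pa : Fin (M - 1) := ⟨(a : ℕ) - 1, hpa⟩ with hpadef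
      have hpaI : Γc pa ∈ cutInterval Γc a := by
        constructor
        · intro p hp
          exact hΓ.monotone (by simp [hpadef, Fin.le_def]; omega)
        · intro p hp
          exact hΓ (by simp [hpadef, Fin.lt_def]; omega)
      have h1 : cc m' ≤ Γc pa := (hI hpaI).1 m' hm'
      have h2 := hsnap m' pa
      have h3 : Γc pa ≤ t := ht.1 pa (by simp [hpadef]; omega)
      rw [abs_of_nonneg (by linarith : (0:ℝ) ≤ Γc pa - cc m')] at h2
      have h4 : cc' m' - cc m' ≤ Γc pa - cc m' := le_trans (le_abs_self _) h2
      linarith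
  · intro m' hm'
    obtain ⟨i₀, hi₀⟩ := hsub m'
    have htc : t < cc m' := (hI ht).2 m' hm'
    rcases Nat.lt_or_ge (a : ℕ) (M - 1) with haM | haM
    · set pa : Fin (M - 1) := ⟨(a : ℕ), haM⟩ with hpadef
      have hta : t < Γc pa := ht.2 pa (by simp [hpadef])
      have hΓa_le : Γc pa ≤ cc m' := by
        by_contra hlt
        push_neg at hlt
        have hcmI : cc m' ∈ cutInterval Γc a := by
          constructor
          · intro p hp
            have := ht.1 p hp
            linarith
          · intro p hp
            exact lt_of_lt_of_le hlt (hΓ.monotone (by simp [hpadef, Fin.le_def]; omega))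
        exact absurd ((hI hcmI).2 m' hm') (lt_irrefl _)
      have h2 := hsnap m' pa
      rw [abs_of_nonpos (by linarith : Γc pa - cc m' ≤ 0)] at h2
      have h4 : -(cc' m' - cc m') ≤ -(Γc pa - cc m') := le_trans (neg_le_abs _) h2
      linarith
    · exfalso
      have hcmI : cc m' ∈ cutInterval Γc a := by
        constructor
        · intro p hp
          have := ht.1 p hp
          linarith
        · intro p hp
          exact absurd (lt_of_le_of_lt hp p.isLt) (by omega)
      exact absurd ((hI hcmI).2 m' hm') (lt_irrefl _)

lemma snap_cell_mem_iff {R S k l : ℕ} {Γ : Grid R S} {G G' : Grid k l}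
    (hsnap : IsSnap Γ G G') {a : Fin R} {b : Fin S}
    (hns : ¬ IsSplit Γ G a b) {x : ℝ × ℝ} (hx : x ∈ Γ.cell a b)
    (i : Fin k) (j : Fin l) : x ∈ G.cell i j ↔ x ∈ G'.cell i j := by
  rw [IsSplit, not_not] at hns
  obtain ⟨i', j', hsub⟩ := hns
  have hcol : cutInterval Γ.colCuts b ⊆ cutInterval G.colCuts j' := by
    intro u hu
    exact (hsub (⟨hu, hx.2⟩ : ((u, x.2) : ℝ × ℝ) ∈ Γ.cell a b)).1
  have hrow : cutInterval Γ.rowCuts a ⊆ cutInterval G.rowCuts i' := by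
    intro u hu
    exact (hsub (⟨hx.1, hu⟩ : ((x.1, u) : ℝ × ℝ) ∈ Γ.cell a b)).2
  have hcol' : x.1 ∈ cutInterval G'.colCuts j' :=
    snap1d Γ.colCuts_mono hsnap.1.2 hsnap.2.2 hx.1 hcol
  have hrow' : x.2 ∈ cutInterval G'.rowCuts i' :=
    snap1d Γ.rowCuts_mono hsnap.1.1 hsnap.2.1 hx.2 hrow
  constructor
  · intro hxG
    obtain ⟨hi, hj⟩ := Grid.cell_unique G hxG (hsub hx)
    rw [hi, hj]
    exact ⟨hcol', hrow'⟩
  · intro hxG'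
    obtain ⟨hi, hj⟩ := Grid.cell_unique G' hxG' (⟨hcol', hrow'⟩ : x ∈ G'.cell i' j')
    rw [hi, hj]
    exact hsub hx

open MeasureTheory in
lemma tv_bound {R S k l : ℕ} (μ : Measure (ℝ × ℝ)) [IsProbabilityMeasure μ]
    {Γ : Grid R S} {G G' : Grid k l} (hR : 0 < R) (hS : 0 < S) (hk : 0 < k) (hl : 0 < l)
    (hsnap : IsSnap Γ G G') :
    (∑ i : Fin k, ∑ j : Fin l, |gridPMF μ G i j - gridPMF μ G' i j|)
      ≤ 2 * boundaryMass (fun T => (μ T).toReal) Γ G := by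
  classical
  have pmf_eq : ∀ (H : Grid k l) (i : Fin k) (j : Fin l), gridPMF μ H i j
      = ∑ a : Fin R, ∑ b : Fin S, (μ (H.cell i j ∩ Γ.cell a b)).toReal := by
    intro H i j
    rw [gridPMF, ← sum_measure_cells Γ hR hS μ (H.measurableSet_cell i j)]
    rw [ENNReal.toReal_sum (fun a _ => ENNReal.sum_ne_top.2 fun b _ => measure_ne_top μ _)]
    exact Finset.sum_congr rfl fun a _ =>
      ENNReal.toReal_sum fun b _ => measure_ne_top μ _
  have cellsum_eq : ∀ (H : Grid k l) (a : Fin R) (b : Fin S),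
      (∑ i : Fin k, ∑ j : Fin l, (μ (H.cell i j ∩ Γ.cell a b)).toReal)
        = (μ (Γ.cell a b)).toReal := by
    intro H a b
    have h := sum_measure_cells H hk hl μ (Γ.measurableSet_cell a b)
    calc (∑ i : Fin k, ∑ j : Fin l, (μ (H.cell i j ∩ Γ.cell a b)).toReal)
        = ∑ i : Fin k, ∑ j : Fin l, (μ (Γ.cell a b ∩ H.cell i j)).toReal := by
          refine Finset.sum_congr rfl fun i _ => Finset.sum_congr rfl fun j _ => ?_
          rw [Set.inter_comm]
      _ = ((∑ i : Fin k, ∑ j : Fin l, μ (Γ.cell a b ∩ H.cell i j))).toReal := by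
          rw [ENNReal.toReal_sum (fun a _ => ENNReal.sum_ne_top.2 fun b _ => measure_ne_top μ _)]
          exact Finset.sum_congr rfl fun i _ =>
            (ENNReal.toReal_sum fun j _ => measure_ne_top μ _).symm
      _ = (μ (Γ.cell a b)).toReal := by rw [h]
  have cell_eq : ∀ (a : Fin R) (b : Fin S), ¬ IsSplit Γ G a b →
      ∀ (i : Fin k) (j : Fin l), G.cell i j ∩ Γ.cell a b = G'.cell i j ∩ Γ.cell a b := by
    intro a b hns i j
    ext x
    constructor
    · rintro ⟨h1, h2⟩; exact ⟨(snap_cell_mem_iff hsnap hns h2 i j).1 h1, h2⟩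
    · rintro ⟨h1, h2⟩; exact ⟨(snap_cell_mem_iff hsnap hns h2 i j).2 h1, h2⟩
  have key : ∀ (i : Fin k) (j : Fin l), |gridPMF μ G i j - gridPMF μ G' i j|
      ≤ ∑ a : Fin R, ∑ b : Fin S, (if IsSplit Γ G a b then
          (μ (G.cell i j ∩ Γ.cell a b)).toReal + (μ (G'.cell i j ∩ Γ.cell a b)).toReal
        else 0) := by
    intro i j
    rw [pmf_eq G i j, pmf_eq G' i j]
    simp only [← Finset.sum_sub_distrib]
    refine le_trans (Finset.abs_sum_le_sum_abs _ _) (Finset.sum_le_sum fun a _ =>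
      le_trans (Finset.abs_sum_le_sum_abs _ _) (Finset.sum_le_sum fun b _ => ?_))
    by_cases hsp : IsSplit Γ G a b
    · rw [if_pos hsp]
      refine le_trans (abs_sub _ _) ?_
      rw [abs_of_nonneg ENNReal.toReal_nonneg, abs_of_nonneg ENNReal.toReal_nonneg]
    · rw [if_neg hsp, cell_eq a b hsp i j]
      simp
  have swap4 : ∀ (F : Fin k → Fin l → Fin R → Fin S → ℝ),
      (∑ i, ∑ j, ∑ a, ∑ b, F i j a b) = ∑ a, ∑ b, ∑ i, ∑ j, F i j a b := by
    intro F
    have h1 : ∀ i : Fin k, (∑ j, ∑ a, ∑ b, F i j a b)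
        = ∑ a : Fin R, ∑ b : Fin S, ∑ j, F i j a b := by
      intro i
      rw [Finset.sum_comm]
      exact Finset.sum_congr rfl fun a _ => Finset.sum_comm
    simp only [h1]
    rw [Finset.sum_comm]
    exact Finset.sum_congr rfl fun a _ => Finset.sum_comm
  calc (∑ i : Fin k, ∑ j : Fin l, |gridPMF μ G i j - gridPMF μ G' i j|)
      ≤ ∑ i : Fin k, ∑ j : Fin l, ∑ a : Fin R, ∑ b : Fin S, (if IsSplit Γ G a b then
          (μ (G.cell i j ∩ Γ.cell a b)).toReal + (μ (G'.cell i j ∩ Γ.cell a b)).toReal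
        else 0) :=
        Finset.sum_le_sum fun i _ => Finset.sum_le_sum fun j _ => key i j
    _ = ∑ a : Fin R, ∑ b : Fin S, ∑ i : Fin k, ∑ j : Fin l, (if IsSplit Γ G a b then
          (μ (G.cell i j ∩ Γ.cell a b)).toReal + (μ (G'.cell i j ∩ Γ.cell a b)).toReal
        else 0) := swap4 _
    _ = ∑ a : Fin R, ∑ b : Fin S, (if IsSplit Γ G a b then
          2 * (μ (Γ.cell a b)).toReal else 0) := by
        refine Finset.sum_congr rfl fun a _ => Finset.sum_congr rfl fun b _ => ?_
        by_cases hsp : IsSplit Γ G a b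
        · simp only [if_pos hsp]
          rw [show (∑ i : Fin k, ∑ j : Fin l,
              ((μ (G.cell i j ∩ Γ.cell a b)).toReal + (μ (G'.cell i j ∩ Γ.cell a b)).toReal))
            = (∑ i : Fin k, ∑ j : Fin l, (μ (G.cell i j ∩ Γ.cell a b)).toReal)
              + ∑ i : Fin k, ∑ j : Fin l, (μ (G'.cell i j ∩ Γ.cell a b)).toReal by
              simp [Finset.sum_add_distrib]]
          rw [cellsum_eq G a b, cellsum_eq G' a b]
          ring
        · simp [hsp]
    _ = 2 * boundaryMass (fun T => (μ T).toReal) Γ G := by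
        rw [boundaryMass, Finset.mul_sum]
        refine Finset.sum_congr rfl fun a _ => ?_
        rw [Finset.mul_sum]
        refine Finset.sum_congr rfl fun b _ => ?_
        by_cases hsp : IsSplit Γ G a b
        · simp [hsp]
        · simp [hsp]

end Geometry

section Assembly
open MeasureTheory

lemma gridPMF_sum_one {r c : ℕ} (G : Grid r c) (hr : 0 < r) (hc : 0 < c)
    (μ : Measure (ℝ × ℝ)) [IsProbabilityMeasure μ] :
    ∑ i, ∑ j, gridPMF μ G i j = 1 := by
  have h := sum_measure_cells G hr hc μ MeasurableSet.univ
  simp only [Set.univ_inter, measure_univ] at h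
  have h2 := congrArg ENNReal.toReal h
  rw [ENNReal.toReal_sum (fun a _ => ENNReal.sum_ne_top.2 fun b _ => measure_ne_top μ _)] at h2
  rw [ENNReal.toReal_one] at h2
  rw [← h2]
  refine Finset.sum_congr rfl fun i _ => ?_
  rw [ENNReal.toReal_sum fun j _ => measure_ne_top μ _]
  rfl

lemma boundaryMass_nonneg {R S k l : ℕ} (Γ : Grid R S) (G : Grid k l)
    (μ : Measure (ℝ × ℝ)) :
    0 ≤ boundaryMass (fun T => (μ T).toReal) Γ G := by
  refine Finset.sum_nonneg fun a _ => Finset.sum_nonneg fun b _ => ?_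
  split_ifs
  · exact ENNReal.toReal_nonneg
  · exact le_refl 0

lemma boundaryMass_le_one {R S k l : ℕ} (Γ : Grid R S) (G : Grid k l) (hR : 0 < R)
    (hS : 0 < S) (μ : Measure (ℝ × ℝ)) [IsProbabilityMeasure μ] :
    boundaryMass (fun T => (μ T).toReal) Γ G ≤ 1 := by
  have h1 := gridPMF_sum_one Γ hR hS μ
  rw [← h1]
  refine Finset.sum_le_sum fun a _ => Finset.sum_le_sum fun b _ => ?_
  split_ifs
  · exact le_refl _
  · exact ENNReal.toReal_nonneg

lemma xlogb_nonneg {β x : ℝ} (hx : 0 ≤ x) (hx1 : x ≤ 1) (hβ : 1 ≤ β) : 0 ≤ xlogb β x := by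
  rw [xlogb]
  split_ifs with h
  · exact le_refl 0
  · have hx0 : 0 < x := lt_of_le_of_ne hx (Ne.symm h)
    have : (1:ℝ) ≤ β / x := by
      rw [le_div_iff₀ hx0]; nlinarith
    exact mul_nonneg hx (Real.logb_nonneg (by norm_num) this)

lemma MI_snap_bound {R S k l : ℕ} (μ : Measure (ℝ × ℝ)) [IsProbabilityMeasure μ]
    {Γ : Grid R S} {G G' : Grid k l} (hR : 0 < R) (hS : 0 < S) (hk : 2 ≤ k) (hl : 2 ≤ l)
    (hsnap : IsSnap Γ G G')
    (hδ : boundaryMass (fun T => (μ T).toReal) Γ G < 1/2) :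
    |MI (gridPMF μ G) - MI (gridPMF μ G')|
      ≤ 12 * xlogb ((k * l : ℕ) : ℝ) (boundaryMass (fun T => (μ T).toReal) Γ G) := by
  have hk0 : 0 < k := by omega
  have hl0 : 0 < l := by omega
  set δ := boundaryMass (fun T => (μ T).toReal) Γ G with hδdef
  have hδ0 : 0 ≤ δ := boundaryMass_nonneg Γ G μ
  set β : ℝ := ((k * l : ℕ) : ℝ) with hβdef
  have hk' : (2:ℝ) ≤ (k:ℝ) := by exact_mod_cast hk
  have hl' : (2:ℝ) ≤ (l:ℝ) := by exact_mod_cast hl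
  have hβ4 : (4:ℝ) ≤ β := by
    rw [hβdef]; push_cast; nlinarith
  have hkβ : (k:ℝ) ≤ β := by
    rw [hβdef]; push_cast; nlinarith
  have hlβ : (l:ℝ) ≤ β := by
    rw [hβdef]; push_cast; nlinarith
  have hklβ : (k:ℝ) * (l:ℝ) ≤ β := by rw [hβdef]; push_cast; linarith
  have htv := tv_bound μ hR hS hk0 hl0 hsnap
  rw [← hδdef] at htv
  rcases hδ0.eq_or_lt with h0 | h0
  · -- boundary mass zero: the pmfs agree
    have hpq : gridPMF μ G = gridPMF μ G' := by
      funext i j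
      have hterm : |gridPMF μ G i j - gridPMF μ G' i j| = 0 := by
        have hnn : ∀ i' j', (0:ℝ) ≤ |gridPMF μ G i' j' - gridPMF μ G' i' j'| :=
          fun _ _ => abs_nonneg _
        have hle : |gridPMF μ G i j - gridPMF μ G' i j|
            ≤ ∑ i', ∑ j', |gridPMF μ G i' j' - gridPMF μ G' i' j'| := by
          calc |gridPMF μ G i j - gridPMF μ G' i j|
              ≤ ∑ j', |gridPMF μ G i j' - gridPMF μ G' i j'| :=
                Finset.single_le_sum
                  (f := fun j' => |gridPMF μ G i j' - gridPMF μ G' i j'|)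
                  (fun j' _ => abs_nonneg _) (Finset.mem_univ j)
            _ ≤ ∑ i', ∑ j', |gridPMF μ G i' j' - gridPMF μ G' i' j'| :=
                Finset.single_le_sum
                  (f := fun i' => ∑ j', |gridPMF μ G i' j' - gridPMF μ G' i' j'|)
                  (fun i' _ => Finset.sum_nonneg fun j' _ => abs_nonneg _)
                  (Finset.mem_univ i)
        have : (0:ℝ) ≤ |gridPMF μ G i j - gridPMF μ G' i j| := abs_nonneg _
        nlinarith
      have := abs_eq_zero.1 hterm
      linarith
    rw [hpq, sub_self, abs_zero, ← h0]
    simp [xlogb]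
  · have hδ1 : δ ≤ 1/2 := le_of_lt hδ
    have hE1 : 2 * δ ≤ 1 := by linarith
    have hE0 : 0 < 2 * δ := by linarith
    have hmain := abs_MI_sub_le (gridPMF μ G) (gridPMF μ G')
      (fun i j => ENNReal.toReal_nonneg) (fun i j => ENNReal.toReal_nonneg)
      (gridPMF_sum_one G hk0 hl0 μ) (gridPMF_sum_one G' hk0 hl0 μ)
      hkβ hlβ hklβ hβ4 (le_trans htv (by linarith)) hE1 hE0
    refine le_trans hmain ?_
    have hlog2 : (0:ℝ) < Real.log 2 := Real.log_pos (by norm_num)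
    have hβ0 : (0:ℝ) < β := by linarith
    have hlogmono : Real.log (β / (2 * δ)) ≤ Real.log (β / δ) := by
      apply Real.log_le_log (by positivity)
      apply div_le_div_of_nonneg_left hβ0.le h0
      linarith
    have hlogpos : 0 ≤ Real.log (β / (2 * δ)) := by
      apply Real.log_nonneg
      rw [le_div_iff₀ hE0]; nlinarith
    have hx : xlogb β δ = δ * Real.log (β / δ) / Real.log 2 := by
      rw [xlogb, if_neg (ne_of_gt h0), Real.logb]
      ring
    rw [hx, show 12 * (δ * Real.log (β / δ) / Real.log 2)
      = 12 * (δ * Real.log (β / δ)) / Real.log 2 by ring]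
    have h12 : 6 * (2 * δ * Real.log (β / (2 * δ))) ≤ 12 * (δ * Real.log (β / δ)) := by
      nlinarith
    exact (div_le_div_iff_of_pos_right hlog2).2 h12

end Assembly

theorem stmt3 :
    ∃ A > (0 : ℝ), ∀ (μ ν : Measure (ℝ × ℝ)), IsProbabilityMeasure μ →
      IsProbabilityMeasure ν →
      ∀ (R S k l : ℕ) (Γ : Grid R S) (G G' : Grid k l), 2 ≤ k → 2 ≤ l →
        k * l < R * S → IsSnap Γ G G' →
        |MI (gridPMF μ G) - MI (gridPMF ν G)| ≤
          A * xlogb (k * l : ℕ) (boundaryMass (fun T => (μ T).toReal) Γ G) +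
          A * xlogb (k * l : ℕ) (boundaryMass (fun T => (ν T).toReal) Γ G) +
          |MI (gridPMF μ G') - MI (gridPMF ν G')| := by
  refine ⟨12, by norm_num, ?_⟩
  intro μ ν hμ hν R S k l Γ G G' hk hl hRS hsnap
  have hk0 : 0 < k := by omega
  have hl0 : 0 < l := by omega
  have hRS0 : 0 < R * S := lt_of_le_of_lt (Nat.zero_le _) hRS
  have hR : 0 < R := Nat.pos_of_ne_zero (fun h => by simp [h] at hRS0)
  have hS : 0 < S := Nat.pos_of_ne_zero (fun h => by simp [h] at hRS0)
  set δ := boundaryMass (fun T => (μ T).toReal) Γ G with hδdef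
  set d := boundaryMass (fun T => (ν T).toReal) Γ G with hddef
  set β : ℝ := ((k * l : ℕ) : ℝ) with hβdef
  have hk' : (2:ℝ) ≤ (k:ℝ) := by exact_mod_cast hk
  have hl' : (2:ℝ) ≤ (l:ℝ) := by exact_mod_cast hl
  have hβ4 : (4:ℝ) ≤ β := by rw [hβdef]; push_cast; nlinarith
  have hβ1 : (1:ℝ) ≤ β := by linarith
  have hkβ : (k:ℝ) ≤ β := by rw [hβdef]; push_cast; nlinarith
  have hlβ : (l:ℝ) ≤ β := by rw [hβdef]; push_cast; nlinarith
  have hklβ : (k:ℝ) * (l:ℝ) ≤ β := by rw [hβdef]; push_cast; linarith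
  have hδ0 : 0 ≤ δ := boundaryMass_nonneg Γ G μ
  have hd0 : 0 ≤ d := boundaryMass_nonneg Γ G ν
  have hδ1 : δ ≤ 1 := boundaryMass_le_one Γ G hR hS μ
  have hd1 : d ≤ 1 := boundaryMass_le_one Γ G hR hS ν
  have hxδ : 0 ≤ xlogb β δ := xlogb_nonneg hδ0 hδ1 hβ1
  have hxd : 0 ≤ xlogb β d := xlogb_nonneg hd0 hd1 hβ1
  have hmid : 0 ≤ |MI (gridPMF μ G') - MI (gridPMF ν G')| := abs_nonneg _
  by_cases hcase : δ < 1/2 ∧ d < 1/2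
  · obtain ⟨h1, h2⟩ := hcase
    have b1 := MI_snap_bound μ hR hS hk hl hsnap h1
    have b2 := MI_snap_bound ν hR hS hk hl hsnap h2
    rw [← hδdef] at b1
    rw [← hddef] at b2
    have tri : |MI (gridPMF μ G) - MI (gridPMF ν G)|
        ≤ |MI (gridPMF μ G) - MI (gridPMF μ G')|
          + |MI (gridPMF μ G') - MI (gridPMF ν G')|
          + |MI (gridPMF ν G') - MI (gridPMF ν G)| := by
      have e : MI (gridPMF μ G) - MI (gridPMF ν G)
          = (MI (gridPMF μ G) - MI (gridPMF μ G'))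
            + (MI (gridPMF μ G') - MI (gridPMF ν G'))
            + (MI (gridPMF ν G') - MI (gridPMF ν G)) := by ring
      rw [e]
      exact le_trans (abs_add_le _ _) (add_le_add (abs_add_le _ _) le_rfl)
    have b2' : |MI (gridPMF ν G') - MI (gridPMF ν G)|
        = |MI (gridPMF ν G) - MI (gridPMF ν G')| := abs_sub_comm _ _
    rw [b2'] at tri
    linarith
  · have hlog2 : (0:ℝ) < Real.log 2 := Real.log_pos (by norm_num)
    have hlogβ : 0 ≤ Real.log β := Real.log_nonneg hβ1
    have m1 := abs_MI_le (gridPMF μ G) (fun i j => ENNReal.toReal_nonneg)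
      (gridPMF_sum_one G hk0 hl0 μ) hkβ hlβ hklβ hβ1
    have m2 := abs_MI_le (gridPMF ν G) (fun i j => ENNReal.toReal_nonneg)
      (gridPMF_sum_one G hk0 hl0 ν) hkβ hlβ hklβ hβ1
    have hLHS : |MI (gridPMF μ G) - MI (gridPMF ν G)|
        ≤ 2 * (Real.log β / Real.log 2) := by
      have := abs_sub (MI (gridPMF μ G)) (MI (gridPMF ν G))
      linarith
    have hkey : ∀ x : ℝ, 1/2 ≤ x → x ≤ 1 →
        2 * (Real.log β / Real.log 2) ≤ 12 * xlogb β x := by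
      intro x hx1 hx2
      have hx0 : (0:ℝ) < x := by linarith
      rw [xlogb, if_neg (ne_of_gt hx0), Real.logb]
      have hlogm : Real.log β ≤ Real.log (β / x) := by
        apply Real.log_le_log (by linarith)
        rw [le_div_iff₀ hx0]
        nlinarith
      have hL : 0 ≤ Real.log (β / x) := le_trans hlogβ hlogm
      have q1 : Real.log β / Real.log 2 ≤ Real.log (β / x) / Real.log 2 :=
        (div_le_div_iff_of_pos_right hlog2).2 hlogm
      have q0 : 0 ≤ Real.log β / Real.log 2 := by positivity
      have q2 : 0 ≤ Real.log (β / x) / Real.log 2 := le_trans q0 q1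
      nlinarith [mul_nonneg (by linarith : (0:ℝ) ≤ x - 1/2) q2]
    by_cases hδ2 : 1/2 ≤ δ
    · have := hkey δ hδ2 hδ1
      linarith
    · have hd2 : 1/2 ≤ d := by
        by_contra hd3
        exact hcase ⟨lt_of_not_ge hδ2, lt_of_not_ge hd3⟩
      have := hkey d hd2 hd1
      linarith

end
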